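/- Let s : Fin 3 → Fin 3 be the cyclic shift s x = x + α (mod 3) with α ∈ {1, 2}, and let f : Fin 3 → Fin 3 be a unary function whose range has exactly two elements (f omits exactly one value). Then every unary function g : Fin 3 → Fin 3 that is not surjective (omits at least one value) belongs to the subsemigroup of (Fin 3 → Fin 3) under composition generated by {f, s}. -/

import Mathlib

set_option maxRecDepth 100000
set_option maxHeartbeats 2000000

abbrev F3 := Fin 3 → Fin 3

/-- pick a generator -/
def pick3 (f s : F3) (b : Bool) : F3 := if b then f else s

/-- evaluate a word (list of generator choices) as a composition -/
def evalW (f s : F3) : List Bool → F3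
  | [] => f
  | [b] => pick3 f s b
  | b :: c :: rest => pick3 f s b ∘ evalW f s (c :: rest)

def tbl : List (Nat × List Bool) := [
  (756, [true,true]),
  (757, [true]),
  (758, [false,false,true,false,false,true]),
  (759, [true,false]),
  (760, [true,false,false,true,false,false]),
  (762, [false,false,true,false,false,true,false]),
  (764, [false,false,true,false,false]),
  (765, [true,false,false]),
  (766, [true,false,false,true,false]),
  (768, [true,false,false,true]),
  (769, [false,true,true]),
  (770, [false,true]),
  (772, [false,true,false]),
  (773, [false,true,false,false,true,false,false]),
  (774, [false,false,true,false,false,true,false,false]),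
  (776, [false,false,true,false]),
  (778, [false,true,false,false]),
  (779, [false,true,false,false,true,false]),
  (780, [false,false,true]),
  (781, [false,true,false,false,true]),
  (782, [false,false,true,true]),
  (783, [true,false,true]),
  (784, [false,true,false,false,true]),
  (785, [true]),
  (786, [false,true,false,false,true,false]),
  (787, [false,true,false,false]),
  (789, [true,false]),
  (791, [true,false,false,true,false,false]),
  (792, [false,true,false,false,true,false,false]),
  (793, [false,true,false]),
  (795, [false,true]),
  (796, [false,true,false,true]),
  (797, [false,false,true,false,false,true]),
  (799, [false,false,true,false,false,true,false]),
  (800, [false,false,true,false,false]),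
  (801, [true,false,false]),
  (803, [true,false,false,true,false]),
  (805, [false,false,true,false,false,true,false,false]),
  (806, [false,false,true,false]),
  (807, [true,false,false,true]),
  (808, [false,false,true]),
  (809, [false,false,true,false,true]),
  (810, [true,false,false,true]),
  (811, [true,false,false]),
  (812, [false,false,true,false,true,false,false]),
  (813, [true]),
  (814, [true,false,true,false]),
  (816, [false,false,true,false,true]),
  (818, [false,false,true,false]),
  (819, [true,false]),
  (820, [true,false,true]),
  (822, [true,false,true,false,false]),
  (823, [false,true,false,false,true]),
  (824, [false,true,false,false]),
  (826, [false,true]),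
  (827, [false,true,false,true,false]),
  (828, [false,false,true,false,true,false]),
  (830, [false,false,true]),
  (832, [false,true,false]),
  (833, [false,true,false,true]),
  (834, [false,false,true,false,false]),
  (835, [false,true,false,true,false,false]),
  (836, [false,false,true,false,false,true]),
  (837, [false,false,true,false,true]),
  (838, [true,false,false,true,false]),
  (839, [false,false,true,false]),
  (840, [true,false,false,true,false,false]),
  (841, [true]),
  (843, [false,false,true,false,false]),
  (845, [false,false,true,false,false,true]),
  (846, [true,false,false,true]),
  (847, [true,false,false]),
  (849, [true,false]),
  (850, [true,false,true]),
  (851, [false,true,false,false,true,false]),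
  (853, [false,true,false,false,true,false,false]),
  (854, [false,true]),
  (855, [false,false,true]),
  (857, [false,false,true,false,false,true,false,false]),
  (859, [false,true,false,false,true]),
  (860, [false,true,false,false]),
  (861, [false,false,true,false,false,true,false]),
  (862, [false,true,false]),
  (863, [false,true,false,true]),
  (891, [true,true]),
  (892, [false,true,false,true,false,false]),
  (893, [true,false,false]),
  (894, [false,true,false,true]),
  (895, [false,true,false]),
  (897, [true]),
  (899, [true,false,true,false]),
  (900, [false,true,false,true,false]),
  (901, [false,true]),
  (903, [false,true,false,false]),
  (904, [false,true,true]),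
  (905, [false,false,true,false,true,false,false]),
  (907, [false,false,true,false,true]),
  (908, [false,false,true,false]),
  (909, [true,false]),
  (911, [true,false,true]),
  (913, [false,false,true,false,true,false]),
  (914, [false,false,true]),
  (915, [true,false,true,false,false]),
  (916, [false,false,true,false,false]),
  (917, [true,false,true,true]),
  (945, [false,true,false,false,true]),
  (946, [false,true,false]),
  (947, [true,false,true,false]),
  (948, [false,true,false,false]),
  (949, [false,true,false,true]),
  (951, [true,false,true,false,false]),
  (953, [true]),
  (954, [false,true]),
  (955, [false,true,false,true,false,false]),
  (957, [false,true,false,true,false]),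
  (958, [false,false,true,false,false,true]),
  (959, [false,false,true,false]),
  (961, [false,false,true,false,false]),
  (962, [false,false,true,false,true]),
  (963, [true,false,true]),
  (965, [true,false,false]),
  (967, [false,false,true]),
  (968, [false,false,true,false,true,false,false]),
  (969, [true,false]),
  (970, [false,false,true,false,true,false]),
  (971, [true,false,false,true]),
  (972, [true,false,true]),
  (973, [true,false]),
  (974, [false,false,true,true,false]),
  (975, [true,false,false]),
  (976, [true,true]),
  (978, [false,false,true,true,false,false]),
  (980, [false,false,true]),
  (981, [true]),
  (982, [true,true,false,false]),
  (984, [true,true,false]),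
  (985, [true,true,false,true]),
  (986, [false,true,false]),
  (988, [false,true,false,false]),
  (989, [false,true,true]),
  (990, [false,false,true,true]),
  (992, [false,false,true,false,false]),
  (994, [false,true]),
  (995, [false,true,true,false,false]),
  (996, [false,false,true,false]),
  (997, [false,true,true,false]),
  (998, [false,true,true,false,true]),
  (999, [true,true,false,false,true]),
  (1000, [true,true,false,false]),
  (1001, [false,false,true,false,false]),
  (1002, [true,true]),
  (1003, [true,false]),
  (1005, [false,false,true]),
  (1007, [false,false,true,true,false]),
  (1008, [true,true,false]),
  (1009, [true]),
  (1011, [true,false,false]),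
  (1012, [true,false,false,true]),
  (1013, [false,true,true,false,false]),
  (1015, [false,true,true]),
  (1016, [false,true,false]),
  (1017, [false,false,true,false]),
  (1019, [false,false,true,true]),
  (1021, [false,true,true,false]),
  (1022, [false,true]),
  (1023, [false,false,true,true,false,false]),
  (1024, [false,true,false,false]),
  (1025, [false,true,false,false,true]),
  (1053, [true,false,true,true]),
  (1054, [true,false,true]),
  (1055, [false,false,true]),
  (1056, [true,false,true,false]),
  (1057, [true,false,false]),
  (1059, [false,false,true,false]),
  (1061, [false,false,true,false,true,false,false]),
  (1062, [true,false,true,false,false]),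
  (1063, [true,false]),
  (1065, [true]),
  (1066, [true,true]),
  (1067, [false,true,false,true]),
  (1069, [false,true,false,true,false]),
  (1070, [false,true,false,false]),
  (1071, [false,false,true,false,false]),
  (1073, [false,false,true,false,true,false]),
  (1075, [false,true,false,true,false,false]),
  (1076, [false,true,false]),
  (1077, [false,false,true,false,true]),
  (1078, [false,true]),
  (1079, [false,true,true]),
  (1107, [false,false,true,false,false,true]),
  (1108, [false,false,true]),
  (1109, [false,true,false,true]),
  (1110, [false,false,true,false]),
  (1111, [false,false,true,false,true,false,false]),
  (1113, [false,true,false,true,false]),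
  (1115, [false,true,false,false]),
  (1116, [false,false,true,false,false]),
  (1117, [false,false,true,false,true,false]),
  (1119, [false,false,true,false,true]),
  (1120, [true,false,false,true]),
  (1121, [true]),
  (1123, [true,false]),
  (1124, [true,false,true,false,false]),
  (1125, [false,true,false,true,false,false]),
  (1127, [false,true,false]),
  (1129, [true,false,false]),
  (1130, [true,false,true,false]),
  (1131, [false,true]),
  (1132, [true,false,true]),
  (1133, [false,true,false,false,true]),
  (1161, [false,true,true,false,true]),
  (1162, [false,false,true,false,false]),
  (1163, [false,true,true,false,false]),
  (1164, [false,false,true]),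
  (1165, [false,false,true,true,false]),
  (1167, [false,true,true]),
  (1169, [false,true,false]),
  (1170, [false,false,true,false]),
  (1171, [false,false,true,true]),
  (1173, [false,false,true,true,false,false]),
  (1174, [true,false,true]),
  (1175, [true,false,false]),
  (1177, [true]),
  (1178, [true,true,false]),
  (1179, [false,true,true,false]),
  (1181, [false,true]),
  (1183, [true,false]),
  (1184, [true,true]),
  (1185, [false,true,false,false]),
  (1186, [true,true,false,false]),
  (1187, [true,true,false,true]),
  (1188, [false,true,true]),
  (1189, [false,false,true,false,true,false]),
  (1190, [false,true,false]),
  (1191, [false,false,true,false,true,false,false]),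
  (1192, [false,false,true]),
  (1194, [false,true,false,false]),
  (1196, [false,true,false,true]),
  (1197, [false,false,true,false,true]),
  (1198, [false,false,true,false,false]),
  (1200, [false,false,true,false]),
  (1201, [true,false,true,true]),
  (1202, [true,false,true,false]),
  (1204, [true,false,true,false,false]),
  (1205, [true]),
  (1206, [false,true]),
  (1208, [false,true,false,true,false,false]),
  (1210, [true,false,true]),
  (1211, [true,false,false]),
  (1212, [false,true,false,true,false]),
  (1213, [true,false]),
  (1214, [true,true]),
  (1215, [true,false,false,true]),
  (1216, [false,true,true,false]),
  (1217, [true,false]),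
  (1218, [false,true,true,false,false]),
  (1219, [false,true]),
  (1221, [true,false,false]),
  (1223, [true,true]),
  (1224, [false,true,true]),
  (1225, [false,true,false,false]),
  (1227, [false,true,false]),
  (1228, [false,true,false,false,true]),
  (1229, [false,false,true,true,false]),
  (1231, [false,false,true,true,false,false]),
  (1232, [false,false,true]),
  (1233, [true]),
  (1235, [true,true,false,false]),
  (1237, [false,false,true,true]),
  (1238, [false,false,true,false,false]),
  (1239, [true,true,false]),
  (1240, [false,false,true,false]),
  (1241, [true,true,false,false,true]),
  (1269, [false,true,true]),
  (1270, [false,true,false,false]),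
  (1271, [true,false,false,true,false,false]),
  (1272, [false,true]),
  (1273, [false,true,false,false,true,false]),
  (1275, [true,false,false,true]),
  (1277, [true,false]),
  (1278, [false,true,false]),
  (1279, [false,true,false,false,true]),
  (1281, [false,true,false,false,true,false,false]),
  (1282, [false,false,true,true]),
  (1283, [false,false,true,false,false]),
  (1285, [false,false,true]),
  (1286, [false,false,true,false,false,true,false]),
  (1287, [true,false,false,true,false]),
  (1289, [true]),
  (1291, [false,false,true,false]),
  (1292, [false,false,true,false,false,true]),
  (1293, [true,false,false]),
  (1294, [false,false,true,false,false,true,false,false]),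
  (1295, [true,true]),
  (1323, [false,false,true,true]),
  (1324, [false,false,true,false]),
  (1325, [false,true,false,false,true,false]),
  (1326, [false,false,true,false,false]),
  (1327, [false,false,true,false,false,true]),
  (1329, [false,true,false,false,true,false,false]),
  (1331, [false,true]),
  (1332, [false,false,true]),
  (1333, [false,false,true,false,false,true,false,false]),
  (1335, [false,false,true,false,false,true,false]),
  (1336, [true,true]),
  (1337, [true,false]),
  (1339, [true,false,false]),
  (1340, [true,false,false,true]),
  (1341, [false,true,false,false,true]),
  (1343, [false,true,false,false]),
  (1345, [true]),
  (1346, [true,false,false,true,false,false]),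
  (1347, [false,true,false]),
  (1348, [true,false,false,true,false]),
  (1349, [false,true,true]),
  (1350, [false,true,false,true]),
  (1351, [false,false,true,false,false,true,false,false]),
  (1352, [false,true,false,false]),
  (1353, [false,false,true,false,false,true]),
  (1354, [false,false,true,false]),
  (1356, [false,true]),
  (1358, [false,true,false,false,true,false]),
  (1359, [false,false,true,false,false,true,false]),
  (1360, [false,false,true]),
  (1362, [false,false,true,false,false]),
  (1363, [false,false,true,false,true]),
  (1364, [true,false,false,true,false,false]),
  (1366, [true,false,false,true]),
  (1367, [true,false]),
  (1368, [false,true,false]),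
  (1370, [false,true,false,false,true]),
  (1372, [true,false,false,true,false]),
  (1373, [true]),
  (1374, [false,true,false,false,true,false,false]),
  (1375, [true,false,false]),
  (1376, [true,false,true]),
  (1377, [true,true,false,true]),
  (1378, [false,true]),
  (1379, [true,true]),
  (1380, [false,true,false]),
  (1381, [false,true,true,false,false]),
  (1383, [true,true,false]),
  (1385, [true,false,false]),
  (1386, [false,true,false,false]),
  (1387, [false,true,true,false]),
  (1389, [false,true,true]),
  (1390, [false,true,true,false,true]),
  (1391, [false,false,true]),
  (1393, [false,false,true,false]),
  (1394, [false,false,true,true,false,false]),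
  (1395, [true,true,false,false]),
  (1397, [true,false]),
  (1399, [false,false,true,false,false]),
  (1400, [false,false,true,true,false]),
  (1401, [true]),
  (1402, [false,false,true,true]),
  (1403, [true,false,true]),
  (1404, [false,true,false,false,true]),
  (1405, [false,false,true,true]),
  (1406, [false,true]),
  (1407, [false,false,true,true,false]),
  (1408, [false,false,true,false,false]),
  (1410, [false,true,false]),
  (1412, [false,true,true,false,false]),
  (1413, [false,false,true,true,false,false]),
  (1414, [false,false,true,false]),
  (1416, [false,false,true]),
  (1417, [true,true,false,false,true]),
  (1418, [true,true]),
  (1420, [true,true,false]),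
  (1421, [true,false,false]),
  (1422, [false,true,false,false]),
  (1424, [false,true,true,false]),
  (1426, [true,true,false,false]),
  (1427, [true,false]),
  (1428, [false,true,true]),
  (1429, [true]),
  (1430, [true,false,false,true]),
  (1485, [true,true]),
  (1486, [true]),
  (1487, [false,true,false,true]),
  (1488, [true,false,false]),
  (1489, [true,false,true,false]),
  (1491, [false,true,false,true,false,false]),
  (1493, [false,true,false]),
  (1494, [true,false]),
  (1495, [true,false,true,false,false]),
  (1497, [true,false,true]),
  (1498, [true,false,true,true]),
  (1499, [false,false,true]),
  (1501, [false,false,true,false,false]),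
  (1502, [false,false,true,false,true,false]),
  (1503, [false,true,false,true,false]),
  (1505, [false,true,false,false]),
  (1507, [false,false,true,false]),
  (1508, [false,false,true,false,true,false,false]),
  (1509, [false,true]),
  (1510, [false,false,true,false,true]),
  (1511, [false,true,true]),
  (1512, [true,false,false,true]),
  (1513, [false,false,true,false,true]),
  (1514, [true]),
  (1515, [false,false,true,false,true,false,false]),
  (1516, [false,false,true,false]),
  (1518, [true,false,false]),
  (1520, [true,false,true,false]),
  (1521, [false,false,true,false,true,false]),
  (1522, [false,false,true,false,false]),
  (1524, [false,false,true]),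
  (1525, [false,false,true,false,false,true]),
  (1526, [false,true,false,true]),
  (1528, [false,true,false,true,false,false]),
  (1529, [false,true,false]),
  (1530, [true,false]),
  (1532, [true,false,true,false,false]),
  (1534, [false,true,false,true,false]),
  (1535, [false,true,false,false]),
  (1536, [true,false,true]),
  (1537, [false,true]),
  (1538, [false,true,false,false,true]),
  (1539, [true,false,true]),
  (1540, [true,false]),
  (1541, [false,true,false,false,true,false]),
  (1542, [true]),
  (1543, [true,false,false,true,false,false]),
  (1545, [false,true,false,false,true]),
  (1547, [false,true,false,false]),
  (1548, [true,false,false]),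
  (1549, [true,false,false,true]),
  (1551, [true,false,false,true,false]),
  (1552, [false,false,true,false,true]),
  (1553, [false,false,true,false]),
  (1555, [false,false,true]),
  (1556, [false,false,true,false,false,true,false,false]),
  (1557, [false,true,false,false,true,false,false]),
  (1559, [false,true]),
  (1561, [false,false,true,false,false]),
  (1562, [false,false,true,false,false,true]),
  (1563, [false,true,false]),
  (1564, [false,false,true,false,false,true,false]),
  (1565, [false,true,false,true]),
  (1566, [false,true,false,false,true]),
  (1567, [true,false,true,false,false]),
  (1568, [false,true,false,false]),
  (1569, [true,false,true,false]),
  (1570, [true]),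
  (1572, [false,true,false]),
  (1574, [false,true,false,true]),
  (1575, [true,false,true]),
  (1576, [true,false]),
  (1578, [true,false,false]),
  (1579, [true,false,false,true]),
  (1580, [false,false,true,false,true,false,false]),
  (1582, [false,false,true,false,true,false]),
  (1583, [false,false,true]),
  (1584, [false,true]),
  (1586, [false,true,false,true,false]),
  (1588, [false,false,true,false,true]),
  (1589, [false,false,true,false]),
  (1590, [false,true,false,true,false,false]),
  (1591, [false,false,true,false,false]),
  (1592, [false,false,true,false,false,true]),
  (1620, [true,true]),
  (1621, [false,false,true,false,false,true,false]),
  (1622, [true,false]),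
  (1623, [false,false,true,false,false,true]),
  (1624, [false,false,true,false,false]),
  (1626, [true]),
  (1628, [true,false,false,true,false,false]),
  (1629, [false,false,true,false,false,true,false,false]),
  (1630, [false,false,true]),
  (1632, [false,false,true,false]),
  (1633, [false,false,true,true]),
  (1634, [false,true,false,false,true,false]),
  (1636, [false,true,false,false,true]),
  (1637, [false,true,false,false]),
  (1638, [true,false,false]),
  (1640, [true,false,false,true]),
  (1642, [false,true,false,false,true,false,false]),
  (1643, [false,true]),
  (1644, [true,false,false,true,false]),
  (1645, [false,true,false]),
  (1646, [false,true,true]),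
  (1674, [false,false,true,false,true]),
  (1675, [false,false,true,false,false]),
  (1676, [true,false,false,true,false,false]),
  (1677, [false,false,true,false]),
  (1678, [false,false,true,false,false,true]),
  (1680, [true,false,false,true,false]),
  (1682, [true]),
  (1683, [false,false,true]),
  (1684, [false,false,true,false,false,true,false]),
  (1686, [false,false,true,false,false,true,false,false]),
  (1687, [false,true,false,true]),
  (1688, [false,true,false,false]),
  (1690, [false,true,false]),
  (1691, [false,true,false,false,true]),
  (1692, [true,false,false,true]),
  (1694, [true,false]),
  (1696, [false,true]),
  (1697, [false,true,false,false,true,false]),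
  (1698, [true,false,false]),
  (1699, [false,true,false,false,true,false,false]),
  (1700, [true,false,true]),
  (1701, [true,false,false,true]),
  (1702, [true,false,false]),
  (1703, [false,true,true,false,false]),
  (1704, [true,false]),
  (1705, [true,true]),
  (1707, [false,true,true,false]),
  (1709, [false,true]),
  (1710, [true]),
  (1711, [true,true,false]),
  (1713, [true,true,false,false]),
  (1714, [true,true,false,false,true]),
  (1715, [false,false,true,false,false]),
  (1717, [false,false,true,false]),
  (1718, [false,false,true,true]),
  (1719, [false,true,true]),
  (1721, [false,true,false]),
  (1723, [false,false,true]),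
  (1724, [false,false,true,true,false]),
  (1725, [false,true,false,false]),
  (1726, [false,false,true,true,false,false]),
  (1727, [false,true,false,false,true]),
  (1728, [true,true,false,true]),
  (1729, [true,true,false]),
  (1730, [false,true,false]),
  (1731, [true,true]),
  (1732, [true,false,false]),
  (1734, [false,true]),
  (1736, [false,true,true,false,false]),
  (1737, [true,true,false,false]),
  (1738, [true]),
  (1740, [true,false]),
  (1741, [true,false,true]),
  (1742, [false,false,true,true,false]),
  (1744, [false,false,true,true]),
  (1745, [false,false,true,false,false]),
  (1746, [false,true,false,false]),
  (1748, [false,true,true]),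
  (1750, [false,false,true,true,false,false]),
  (1751, [false,false,true]),
  (1752, [false,true,true,false]),
  (1753, [false,false,true,false]),
  (1754, [false,true,true,false,true]),
  (1782, [false,true,true]),
  (1783, [true,false,false,true]),
  (1784, [false,true]),
  (1785, [true,false,false,true,false,false]),
  (1786, [true,false]),
  (1788, [false,true,false,false]),
  (1790, [false,true,false,false,true,false]),
  (1791, [true,false,false,true,false]),
  (1792, [true,false,false]),
  (1794, [true]),
  (1795, [true,true]),
  (1796, [false,false,true,false,false,true]),
  (1798, [false,false,true,false,false,true,false,false]),
  (1799, [false,false,true,false]),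
  (1800, [false,true,false]),
  (1802, [false,true,false,false,true,false,false]),
  (1804, [false,false,true,false,false,true,false]),
  (1805, [false,false,true,false,false]),
  (1806, [false,true,false,false,true]),
  (1807, [false,false,true]),
  (1808, [false,false,true,true]),
  (1836, [false,true,false,true]),
  (1837, [false,true]),
  (1838, [false,false,true,false,false,true]),
  (1839, [false,true,false,false]),
  (1840, [false,true,false,false,true,false]),
  (1842, [false,false,true,false,false,true,false,false]),
  (1844, [false,false,true,false]),
  (1845, [false,true,false]),
  (1846, [false,true,false,false,true,false,false]),
  (1848, [false,true,false,false,true]),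
  (1849, [true,false,true]),
  (1850, [true]),
  (1852, [true,false,false]),
  (1853, [true,false,false,true,false]),
  (1854, [false,false,true,false,false,true,false]),
  (1856, [false,false,true,false,false]),
  (1858, [true,false]),
  (1859, [true,false,false,true,false,false]),
  (1860, [false,false,true]),
  (1861, [true,false,false,true]),
  (1862, [false,false,true,false,true]),
  (1890, [false,true,false,false,true]),
  (1891, [false,true,false]),
  (1892, [false,false,true,true,false]),
  (1893, [false,true]),
  (1894, [false,true,true,false,false]),
  (1896, [false,false,true,true]),
  (1898, [false,false,true,false,false]),
  (1899, [false,true,false,false]),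
  (1900, [false,true,true]),
  (1902, [false,true,true,false]),
  (1903, [true,false,false,true]),
  (1904, [true,false]),
  (1906, [true]),
  (1907, [true,true,false,false]),
  (1908, [false,false,true,true,false,false]),
  (1910, [false,false,true]),
  (1912, [true,false,false]),
  (1913, [true,true]),
  (1914, [false,false,true,false]),
  (1915, [true,true,false]),
  (1916, [true,true,false,false,true]),
  (1917, [false,false,true,true]),
  (1918, [false,true,false,false,true,false,false]),
  (1919, [false,false,true,false,false]),
  (1920, [false,true,false,false,true,false]),
  (1921, [false,true]),
  (1923, [false,false,true,false]),
  (1925, [false,false,true,false,false,true]),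
  (1926, [false,true,false,false,true]),
  (1927, [false,true,false]),
  (1929, [false,true,false,false]),
  (1930, [false,true,true]),
  (1931, [true,false,false,true,false,false]),
  (1933, [true,false,false,true,false]),
  (1934, [true]),
  (1935, [false,false,true]),
  (1937, [false,false,true,false,false,true,false]),
  (1939, [true,false,false,true]),
  (1940, [true,false]),
  (1941, [false,false,true,false,false,true,false,false]),
  (1942, [true,false,false]),
  (1943, [true,true]),
  (1944, [true,false,true]),
  (1945, [false,false,true,true,false,false]),
  (1946, [true,false,false]),
  (1947, [false,false,true,true,false]),
  (1948, [false,false,true]),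
  (1950, [true,false]),
  (1952, [true,true]),
  (1953, [false,false,true,true]),
  (1954, [false,false,true,false]),
  (1956, [false,false,true,false,false]),
  (1957, [false,true,true,false,true]),
  (1958, [false,true,true,false,false]),
  (1960, [false,true,true,false]),
  (1961, [false,true]),
  (1962, [true]),
  (1964, [true,true,false]),
  (1966, [false,true,true]),
  (1967, [false,true,false]),
  (1968, [true,true,false,false]),
  (1969, [false,true,false,false]),
  (1970, [true,true,false,true]),
  (1998, [true,false,true,true]),
  (1999, [false,false,true,false]),
  (2000, [true,false,true,false]),
  (2001, [false,false,true]),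
  (2002, [false,false,true,false,true,false,false]),
  (2004, [true,false,true]),
  (2006, [true,false,false]),
  (2007, [false,false,true,false,false]),
  (2008, [false,false,true,false,true]),
  (2010, [false,false,true,false,true,false]),
  (2011, [false,true,true]),
  (2012, [false,true,false]),
  (2014, [false,true]),
  (2015, [false,true,false,true,false,false]),
  (2016, [true,false,true,false,false]),
  (2018, [true]),
  (2020, [false,true,false,false]),
  (2021, [false,true,false,true]),
  (2022, [true,false]),
  (2023, [false,true,false,true,false]),
  (2024, [true,true]),
  (2052, [false,true,true]),
  (2053, [false,true,false,false]),
  (2054, [false,false,true,false,true,false,false]),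
  (2055, [false,true,false]),
  (2056, [false,true,false,true]),
  (2058, [false,false,true,false,true,false]),
  (2060, [false,false,true]),
  (2061, [false,true]),
  (2062, [false,true,false,true,false]),
  (2064, [false,true,false,true,false,false]),
  (2065, [true,true]),
  (2066, [true,false,false]),
  (2068, [true,false]),
  (2069, [true,false,true]),
  (2070, [false,false,true,false,true]),
  (2072, [false,false,true,false]),
  (2074, [true]),
  (2075, [true,false,true,false]),
  (2076, [false,false,true,false,false]),
  (2077, [true,false,true,false,false]),
  (2078, [true,false,true,true]),
  (2079, [false,false,true,false,false,true]),
  (2080, [false,true,false,true,false]),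
  (2081, [false,false,true,false]),
  (2082, [false,true,false,true]),
  (2083, [false,true,false,false]),
  (2085, [false,false,true]),
  (2087, [false,false,true,false,true,false,false]),
  (2088, [false,true,false,true,false,false]),
  (2089, [false,true]),
  (2091, [false,true,false]),
  (2092, [false,true,false,false,true]),
  (2093, [true,false,true,false]),
  (2095, [true,false,true]),
  (2096, [true,false,false]),
  (2097, [false,false,true,false,false]),
  (2099, [false,false,true,false,true]),
  (2101, [true,false,true,false,false]),
  (2102, [true]),
  (2103, [false,false,true,false,true,false]),
  (2104, [true,false]),
  (2105, [true,false,false,true]),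
  (2106, [true,true,false,false,true]),
  (2107, [false,false,true]),
  (2108, [true,true]),
  (2109, [false,false,true,false,false]),
  (2110, [false,false,true,true,false]),
  (2112, [true,true,false,false]),
  (2114, [true,false]),
  (2115, [false,false,true,false]),
  (2116, [false,false,true,true,false,false]),
  (2118, [false,false,true,true]),
  (2119, [false,true,false,false,true]),
  (2120, [false,true]),
  (2122, [false,true,false,false]),
  (2123, [false,true,true,false]),
  (2124, [true,true,false]),
  (2126, [true,false,false]),
  (2128, [false,true,false]),
  (2129, [false,true,true,false,false]),
  (2130, [true]),
  (2131, [false,true,true]),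
  (2132, [true,false,false,true]),
  (2133, [false,true,true,false,true]),
  (2134, [false,true,true]),
  (2135, [false,false,true]),
  (2136, [false,true,true,false,false]),
  (2137, [false,true,false]),
  (2139, [false,false,true,false,false]),
  (2141, [false,false,true,true,false]),
  (2142, [false,true,true,false]),
  (2143, [false,true,false,false]),
  (2145, [false,true]),
  (2146, [true,true,false,true]),
  (2147, [true,true]),
  (2149, [true,true,false,false]),
  (2150, [true,false]),
  (2151, [false,false,true,false]),
  (2153, [false,false,true,true,false,false]),
  (2155, [true,true,false]),
  (2156, [true,false,false]),
  (2157, [false,false,true,true]),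
  (2158, [true]),
  (2159, [true,false,true])]

def lookupW (n : Nat) : List Bool := ((tbl.find? (fun p => p.1 == n)).map Prod.snd).getD []

lemma pick3_mem (f s : Function.End (Fin 3)) (b : Bool) :
    pick3 f s b ∈ Subsemigroup.closure {f, s} := by
  cases b
  · exact Subsemigroup.subset_closure (Set.mem_insert_of_mem _ rfl)
  · exact Subsemigroup.subset_closure (Set.mem_insert _ _)

lemma evalW_mem (f s : Function.End (Fin 3)) :
    ∀ w : List Bool, evalW f s w ∈ Subsemigroup.closure {f, s}
  | [] => Subsemigroup.subset_closure (Set.mem_insert _ _)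
  | [b] => pick3_mem f s b
  | b :: c :: rest => by
      have h := (Subsemigroup.closure {f, s}).mul_mem (pick3_mem f s b)
        (evalW_mem f s (c :: rest))
      simp only [evalW]
      exact h

lemma fn_eta (g : F3) : g = ![g 0, g 1, g 2] := by
  funext x; fin_cases x <;> rfl

lemma key3 : ∀ α a b c d e k : Fin 3, (α = 1 ∨ α = 2) →
    (Finset.image ![a,b,c] Finset.univ).card = 2 →
    (Finset.image ![d,e,k] Finset.univ).card ≠ 3 →
    evalW ![a,b,c] (fun x => x + α)
      (lookupW (((α.val*27 + (a.val*9+b.val*3+c.val))*27 + (d.val*9+e.val*3+k.val))))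
      = ![d,e,k] := by decide

/-- A unary function taking exactly two values, together with a nontrivial cyclic
shift, generates (under composition) all non-surjective unary functions on `E₃`. -/
theorem stmt_13 (α : Fin 3) (hα : α = 1 ∨ α = 2)
    (f : Function.End (Fin 3)) (hf : (Set.range f).ncard = 2)
    (s : Function.End (Fin 3)) (hs : ∀ x, s x = x + α)
    (g : Function.End (Fin 3)) (hg : ¬ Function.Surjective g) :
    g ∈ Subsemigroup.closure {f, s} := by
  have es : s = fun x => x + α := funext hs
  have hf' : (Finset.image ![f 0, f 1, f 2] Finset.univ).card = 2 := by
    rw [← fn_eta f]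
    have hr : Set.range f = ↑(Finset.image f Finset.univ) := by
      ext y
      constructor
      · rintro ⟨a, ha⟩
        exact Finset.mem_coe.mpr (Finset.mem_image.mpr ⟨a, Finset.mem_univ a, ha⟩)
      · intro hy
        obtain ⟨a, -, ha⟩ := Finset.mem_image.mp (Finset.mem_coe.mp hy)
        exact ⟨a, ha⟩
    rw [hr, Set.ncard_coe_finset] at hf
    exact hf
  have hg' : (Finset.image ![g 0, g 1, g 2] Finset.univ).card ≠ 3 := by
    rw [← fn_eta g]
    intro h
    apply hg
    have huniv : Finset.image g Finset.univ = Finset.univ :=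
      Finset.eq_univ_of_card _ (by simpa using h)
    intro y
    have hy : y ∈ Finset.image g Finset.univ := by rw [huniv]; exact Finset.mem_univ y
    obtain ⟨a, -, ha⟩ := Finset.mem_image.mp hy
    exact ⟨a, ha⟩
  have hkey := key3 α (f 0) (f 1) (f 2) (g 0) (g 1) (g 2) hα hf' hg'
  have hmem := evalW_mem (![f 0, f 1, f 2] : F3) (fun x => x + α)
    (lookupW (((α.val*27 + ((f 0).val*9+(f 1).val*3+(f 2).val))*27 +
      ((g 0).val*9+(g 1).val*3+(g 2).val))))
  rw [hkey] at hmem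
  rw [fn_eta g, es, show f = (![f 0, f 1, f 2] : F3) from fn_eta f]
  exact hmem
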